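/- If j < k are nonnegative integers, then ∫_K |h_k - h_j|² dA = ∫_K |h_k|² dA + ∫_K |h_j|² dA ≥ π/4, where h_m(ζ) = √(8m+2) ζ^{4m} and K = {r e^{iθ} : 1/2 < r < 1, π/4 < θ < 3π/4}. -/

import Mathlib

open MeasureTheory Complex Real

/-- The annular sector `K = {r e^{iθ} : 1/2 < r < 1, π/4 < θ < 3π/4}`. -/
def sectorK : Set ℂ :=
  {ζ : ℂ | ∃ r θ : ℝ, 1/2 < r ∧ r < 1 ∧ π/4 < θ ∧ θ < 3*π/4 ∧
    ζ = (r : ℂ) * Complex.exp (θ * Complex.I)}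

/-- `h_m(ζ) = √(8m+2) ζ^{4m}`. -/
noncomputable def hseq (m : ℕ) (ζ : ℂ) : ℂ :=
  (Real.sqrt (8*m + 2) : ℂ) * ζ ^ (4*m)

lemma mem_sectorK_iff {ζ : ℂ} :
    ζ ∈ sectorK ↔ ‖ζ‖ ∈ Set.Ioo (1/2 : ℝ) 1 ∧
      Complex.arg ζ ∈ Set.Ioo (π/4) (3*π/4) := by
  constructor
  · rintro ⟨r, θ, h1, h2, h3, h4, rfl⟩
    have hpi := Real.pi_pos
    have hr : 0 < r := lt_trans (by norm_num) h1
    have hθ : θ ∈ Set.Ioc (-π) π := ⟨by nlinarith, by nlinarith⟩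
    have habs : ‖(r:ℂ) * Complex.exp ((θ:ℂ) * Complex.I)‖ = r := by
      rw [norm_mul, Complex.norm_exp_ofReal_mul_I, Complex.norm_real, Real.norm_of_nonneg hr.le, mul_one]
    have harg : Complex.arg ((r:ℂ) * Complex.exp ((θ:ℂ) * Complex.I)) = θ := by
      rw [Complex.exp_mul_I]
      exact Complex.arg_mul_cos_add_sin_mul_I hr hθ
    exact ⟨by rw [habs]; exact ⟨h1, h2⟩, by rw [harg]; exact ⟨h3, h4⟩⟩
  · rintro ⟨h1, h2⟩
    exact ⟨‖ζ‖, Complex.arg ζ, h1.1, h1.2, h2.1, h2.2,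
      (Complex.norm_mul_exp_arg_mul_I ζ).symm⟩

lemma measurableSet_sectorK : MeasurableSet sectorK := by
  have : sectorK = (fun ζ : ℂ => ‖ζ‖) ⁻¹' Set.Ioo (1/2 : ℝ) 1 ∩
      Complex.arg ⁻¹' Set.Ioo (π/4) (3*π/4) := by
    ext ζ; exact mem_sectorK_iff
  rw [this]
  exact (continuous_norm.measurable measurableSet_Ioo).inter
    (Complex.measurable_arg measurableSet_Ioo)

lemma sectorS_subset : Set.Ioo (1/2 : ℝ) 1 ×ˢ Set.Ioo (π/4) (3*π/4) ⊆
    Set.Ioi (0:ℝ) ×ˢ Set.Ioo (-π) π := by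
  have hpi := Real.pi_pos
  rintro ⟨r, θ⟩ ⟨hr, hθ⟩
  exact ⟨lt_trans (by norm_num) hr.1, by constructor <;> [nlinarith [hθ.1]; nlinarith [hθ.2]]⟩

lemma integral_sectorK (g : ℂ → ℝ) :
    ∫ ζ in sectorK, g ζ =
      ∫ p in Set.Ioo (1/2 : ℝ) 1 ×ˢ Set.Ioo (π/4) (3*π/4),
        p.1 * g ((p.1 : ℂ) * Complex.exp ((p.2 : ℂ) * Complex.I)) := by
  set S : Set (ℝ × ℝ) := Set.Ioo (1/2 : ℝ) 1 ×ˢ Set.Ioo (π/4) (3*π/4) with hS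
  have hSm : MeasurableSet S := measurableSet_Ioo.prod measurableSet_Ioo
  rw [← integral_indicator measurableSet_sectorK,
      ← Complex.integral_comp_polarCoord_symm (Set.indicator sectorK g)]
  have key : ∀ p ∈ polarCoord.target,
      p.1 • Set.indicator sectorK g (Complex.polarCoord.symm p)
        = Set.indicator S
            (fun p : ℝ × ℝ => p.1 * g ((p.1 : ℂ) * Complex.exp ((p.2 : ℂ) * Complex.I))) p := by
    intro p hp
    have hp' : p ∈ Complex.polarCoord.target := hp
    have hre : Complex.polarCoord (Complex.polarCoord.symm p) = p :=
      Complex.polarCoord.right_inv hp'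
    rw [Complex.polarCoord_apply] at hre
    have hsymm : Complex.polarCoord.symm p = (p.1 : ℂ) * Complex.exp ((p.2 : ℂ) * Complex.I) := by
      rw [Complex.polarCoord_symm_apply, Complex.exp_mul_I, Complex.ofReal_cos,
        Complex.ofReal_sin]
    have hmemiff : Complex.polarCoord.symm p ∈ sectorK ↔ p ∈ S := by
      rw [mem_sectorK_iff]
      have h1 : ‖Complex.polarCoord.symm p‖ = p.1 := congrArg Prod.fst hre
      have h2 : Complex.arg (Complex.polarCoord.symm p) = p.2 := congrArg Prod.snd hre
      rw [h1, h2, hS, Set.mem_prod]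
    by_cases hmem : p ∈ S
    · rw [Set.indicator_of_mem hmem, Set.indicator_of_mem (hmemiff.mpr hmem), hsymm,
        smul_eq_mul]
    · rw [Set.indicator_of_notMem hmem,
        Set.indicator_of_notMem (fun h => hmem (hmemiff.mp h)), smul_zero]
  rw [setIntegral_congr_fun (by exact polarCoord.open_target.measurableSet) key,
    setIntegral_indicator hSm,
    Set.inter_eq_self_of_subset_right (by rw [polarCoord_target]; exact sectorS_subset)]

lemma norm_hseq_sq (m : ℕ) {r : ℝ} (hr : 0 ≤ r) (θ : ℝ) :
    ‖hseq m ((r:ℂ) * Complex.exp ((θ:ℂ) * Complex.I))‖^2 = (8*m+2 : ℝ) * r^(8*m) := by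
  have habs : ‖(r:ℂ) * Complex.exp ((θ:ℂ) * Complex.I)‖ = r := by
    rw [norm_mul, Complex.norm_exp_ofReal_mul_I, Complex.norm_real, Real.norm_of_nonneg hr, mul_one]
  rw [hseq, norm_mul, norm_pow, habs,
    Complex.norm_real, Real.norm_of_nonneg (Real.sqrt_nonneg _), mul_pow, ← pow_mul,
    Real.sq_sqrt (by positivity)]
  norm_num [mul_comm, mul_assoc, mul_left_comm]

lemma hseq_polar (m : ℕ) (r θ : ℝ) :
    hseq m ((r:ℂ) * Complex.exp ((θ:ℂ) * Complex.I))
      = ((Real.sqrt (8*m+2) * r^(4*m) : ℝ) : ℂ)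
          * Complex.exp (((4*m*θ : ℝ) : ℂ) * Complex.I) := by
  rw [hseq, mul_pow, ← Complex.exp_nat_mul]
  push_cast
  ring_nf

lemma re_aux (a b x y : ℝ) :
    ((a:ℂ) * Complex.exp ((x:ℂ)*Complex.I)
        * (starRingEnd ℂ) ((b:ℂ) * Complex.exp ((y:ℂ)*Complex.I))).re
      = a * b * Real.cos (x - y) := by
  rw [Complex.exp_mul_I, Complex.exp_mul_I, Real.cos_sub]
  simp [Complex.mul_re, Complex.mul_im, Complex.conj_ofReal, Complex.cos_ofReal_re,
    Complex.sin_ofReal_re, Complex.cos_ofReal_im, Complex.sin_ofReal_im]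
  ring

lemma integral_S_mul (f g : ℝ → ℝ) :
    ∫ p in Set.Ioo (1/2 : ℝ) 1 ×ˢ Set.Ioo (π/4) (3*π/4), f p.1 * g p.2 =
      (∫ r in Set.Ioo (1/2:ℝ) 1, f r) * ∫ θ in Set.Ioo (π/4) (3*π/4), g θ := by
  rw [Measure.volume_eq_prod]
  exact setIntegral_prod_mul f g _ _

lemma integral_Ioo_pow (n : ℕ) (c : ℝ) :
    ∫ r in Set.Ioo (1/2:ℝ) 1, c * r ^ n = c * ((1 - (1/2:ℝ)^(n+1)) / (n+1)) := by
  rw [← integral_Ioc_eq_integral_Ioo,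
    ← intervalIntegral.integral_of_le (by norm_num : (1/2:ℝ) ≤ 1)]
  rw [intervalIntegral.integral_const_mul, integral_pow, one_pow]

lemma integral_Ioo_cos_angle (n : ℕ) (hn : 0 < n) :
    ∫ θ in Set.Ioo (π/4) (3*π/4), Real.cos ((4*n : ℝ) * θ) = 0 := by
  have hc : (4*n : ℝ) ≠ 0 := by positivity
  have hle : π/4 ≤ 3*π/4 := by nlinarith [Real.pi_pos]
  rw [← integral_Ioc_eq_integral_Ioo, ← intervalIntegral.integral_of_le hle,
    intervalIntegral.integral_comp_mul_left Real.cos hc, integral_cos]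
  have h1 : (4*n : ℝ) * (3*π/4) = (3*n : ℕ) * π := by push_cast; ring
  have h2 : (4*n : ℝ) * (π/4) = (n : ℕ) * π := by ring
  rw [h1, h2, Real.sin_nat_mul_pi, Real.sin_nat_mul_pi]
  simp

lemma integral_Ioo_const_angle (c : ℝ) :
    ∫ _ in Set.Ioo (π/4) (3*π/4), c = π/2 * c := by
  rw [setIntegral_const, measureReal_def, Real.volume_Ioo, smul_eq_mul]
  rw [show (3*π/4 - π/4 : ℝ) = π/2 by ring,
    ENNReal.toReal_ofReal (by positivity : (0:ℝ) ≤ π/2)]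

lemma integral_norm_hseq_sq (m : ℕ) :
    ∫ ζ in sectorK, ‖hseq m ζ‖^2 = (1 - (1/2:ℝ)^(8*m+2)) * (π/2) := by
  rw [integral_sectorK (fun ζ => ‖hseq m ζ‖^2)]
  have hcongr : Set.EqOn
      (fun p : ℝ × ℝ => p.1 * ‖hseq m ((p.1 : ℂ) * Complex.exp ((p.2 : ℂ) * Complex.I))‖^2)
      (fun p : ℝ × ℝ => ((8*m+2 : ℝ) * p.1^(8*m+1)) * (fun _ : ℝ => (1:ℝ)) p.2)
      (Set.Ioo (1/2 : ℝ) 1 ×ˢ Set.Ioo (π/4) (3*π/4)) := by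
    rintro ⟨r, θ⟩ ⟨hr, hθ⟩
    have hr0 : (0:ℝ) ≤ r := le_of_lt (lt_trans (by norm_num) hr.1)
    simp only
    rw [norm_hseq_sq m hr0 θ, pow_succ]
    ring
  rw [setIntegral_congr_fun (measurableSet_Ioo.prod measurableSet_Ioo) hcongr,
    integral_S_mul (fun r => (8*(m:ℝ)+2) * r^(8*m+1)) (fun _ => (1:ℝ)),
    integral_Ioo_pow, integral_Ioo_const_angle]
  have h82 : ((8*m+1 : ℕ) : ℝ) + 1 = (8*m+2 : ℝ) := by push_cast; ring
  have hne : (8*m+2 : ℝ) ≠ 0 := by positivity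
  rw [h82]
  field_simp

lemma integral_cross (j k : ℕ) (hjk : j < k) :
    ∫ ζ in sectorK, (hseq k ζ * (starRingEnd ℂ) (hseq j ζ)).re = 0 := by
  rw [integral_sectorK (fun ζ => (hseq k ζ * (starRingEnd ℂ) (hseq j ζ)).re)]
  have hcongr : Set.EqOn
      (fun p : ℝ × ℝ => p.1 * (hseq k ((p.1 : ℂ) * Complex.exp ((p.2 : ℂ) * Complex.I))
        * (starRingEnd ℂ) (hseq j ((p.1 : ℂ) * Complex.exp ((p.2 : ℂ) * Complex.I)))).re)
      (fun p : ℝ × ℝ =>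
        (Real.sqrt (8*k+2) * Real.sqrt (8*j+2) * p.1^(4*k+4*j+1))
          * (fun θ : ℝ => Real.cos ((4*(k-j : ℕ) : ℝ) * θ)) p.2)
      (Set.Ioo (1/2 : ℝ) 1 ×ˢ Set.Ioo (π/4) (3*π/4)) := by
    rintro ⟨r, θ⟩ ⟨hr, hθ⟩
    simp only
    rw [hseq_polar, hseq_polar, re_aux]
    have hang : (4*(k-j : ℕ) : ℝ) * θ = 4*k*θ - 4*j*θ := by
      push_cast [Nat.cast_sub hjk.le]; ring
    rw [hang]
    ring
  rw [setIntegral_congr_fun (measurableSet_Ioo.prod measurableSet_Ioo) hcongr,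
    integral_S_mul (fun r => Real.sqrt (8*k+2) * Real.sqrt (8*j+2) * r^(4*k+4*j+1))
      (fun θ => Real.cos ((4*(k-j : ℕ) : ℝ) * θ)),
    integral_Ioo_cos_angle (k-j) (by omega), mul_zero]

lemma continuous_hseq (m : ℕ) : Continuous (hseq m) :=
  continuous_const.mul (continuous_pow _)

lemma sectorK_subset_ball : sectorK ⊆ Metric.closedBall (0:ℂ) 1 := by
  intro ζ hζ
  rw [mem_sectorK_iff] at hζ
  rw [Metric.mem_closedBall, dist_zero_right]
  exact le_of_lt hζ.1.2

lemma integrableOn_sectorK {f : ℂ → ℝ} (hf : Continuous f) : IntegrableOn f sectorK := by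
  exact (hf.continuousOn.integrableOn_compact (isCompact_closedBall _ _)).mono_set
    sectorK_subset_ball

lemma norm_sub_sq_complex (z w : ℂ) :
    ‖z - w‖^2 = ‖z‖^2 + ‖w‖^2 - 2 * (z * (starRingEnd ℂ) w).re := by
  simp only [Complex.sq_norm, Complex.normSq_apply, Complex.sub_re,
    Complex.sub_im, Complex.mul_re, Complex.mul_im, Complex.conj_re, Complex.conj_im]
  ring

set_option maxHeartbeats 1000000 in
theorem separation_on_K (j k : ℕ) (hjk : j < k) :
    (∫ ζ in sectorK, ‖hseq k ζ - hseq j ζ‖ ^ 2 ∂volume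
        = (∫ ζ in sectorK, ‖hseq k ζ‖ ^ 2 ∂volume)
          + ∫ ζ in sectorK, ‖hseq j ζ‖ ^ 2 ∂volume) ∧
    π / 4 ≤ ∫ ζ in sectorK, ‖hseq k ζ - hseq j ζ‖ ^ 2 ∂volume := by
  have hintk : IntegrableOn (fun ζ => ‖hseq k ζ‖^2) sectorK :=
    integrableOn_sectorK (((continuous_hseq k).norm).pow 2)
  have hintj : IntegrableOn (fun ζ => ‖hseq j ζ‖^2) sectorK :=
    integrableOn_sectorK (((continuous_hseq j).norm).pow 2)
  have hintc : IntegrableOn (fun ζ => 2 * (hseq k ζ * (starRingEnd ℂ) (hseq j ζ)).re) sectorK :=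
    integrableOn_sectorK (continuous_const.mul (Complex.continuous_re.comp
      ((continuous_hseq k).mul (Complex.continuous_conj.comp (continuous_hseq j)))))
  have heq : ∫ ζ in sectorK, ‖hseq k ζ - hseq j ζ‖ ^ 2 ∂volume
      = (∫ ζ in sectorK, ‖hseq k ζ‖ ^ 2 ∂volume)
        + ∫ ζ in sectorK, ‖hseq j ζ‖ ^ 2 ∂volume := by
    have hcongr : Set.EqOn (fun ζ => ‖hseq k ζ - hseq j ζ‖ ^ 2)
        (fun ζ => (‖hseq k ζ‖^2 + ‖hseq j ζ‖^2)
          - 2 * (hseq k ζ * (starRingEnd ℂ) (hseq j ζ)).re) sectorK :=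
      fun ζ _ => norm_sub_sq_complex (hseq k ζ) (hseq j ζ)
    have hsum : IntegrableOn (fun ζ => ‖hseq k ζ‖^2 + ‖hseq j ζ‖^2) sectorK :=
      hintk.add hintj
    rw [setIntegral_congr_fun measurableSet_sectorK hcongr,
      integral_sub hsum hintc, integral_add hintk hintj,
      integral_const_mul, integral_cross j k hjk]
    ring
  refine ⟨heq, ?_⟩
  rw [heq, integral_norm_hseq_sq, integral_norm_hseq_sq]
  have hpi := Real.pi_pos
  have hk2 : (1/2:ℝ)^(8*k+2) ≤ 1/2 := by
    calc (1/2:ℝ)^(8*k+2) ≤ (1/2:ℝ)^1 :=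
      pow_le_pow_of_le_one (by norm_num) (by norm_num) (by omega)
    _ = 1/2 := pow_one _
  have hj2 : (1/2:ℝ)^(8*j+2) ≤ 1/2 := by
    calc (1/2:ℝ)^(8*j+2) ≤ (1/2:ℝ)^1 :=
      pow_le_pow_of_le_one (by norm_num) (by norm_num) (by omega)
    _ = 1/2 := pow_one _
  nlinarith
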